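/- Let M ≥ 1 and let 0 = x_0 < x_1 < ⋯ < x_M = 1 be a partition of [0,1] with cells I_j = (x_j, x_{j+1}). Let p_0, …, p_{M−1} be polynomials (the local pieces of a DG function), with indices taken modulo M (periodicity: p_M := p_0 and node x_M identified with x_0). Define the DG upwind energy form (for advection speed a = 1, upwind numerical flux û(x_j) = p_{j−1}(x_j)) by A := Σ_{j=0}^{M−1} [ ∫_{x_j}^{x_{j+1}} p_j(x) p_j'(x) dx − p_j(x_{j+1}) p_j(x_{j+1}) + p_{j−1}(x_j) p_j(x_j) ]. Then A = −(1/2) Σ_{j=0}^{M−1} ( p_j(x_j) − p_{j−1}(x_j) )², where the node values are taken periodically; in particular A ≤ 0, which gives the L² stability of the semi-discrete discontinuous Galerkin scheme with upwind flux for u_t + u_x = 0 with periodic boundary conditions. -/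
import Mathlib


open MeasureTheory

lemma poly_int (q : Polynomial ℝ) (a b : ℝ) :
    (∫ t in a..b, q.eval t * (Polynomial.derivative q).eval t)
      = q.eval b ^ 2 / 2 - q.eval a ^ 2 / 2 := by
  have h : ∀ t : ℝ, HasDerivAt (fun s => q.eval s ^ 2 / 2)
      (q.eval t * (Polynomial.derivative q).eval t) t := by
    intro t
    have := ((q.hasDerivAt t).pow 2).div_const 2
    simpa [mul_comm, mul_assoc, mul_div_assoc] using this
  have hc : ContinuousOn (fun t : ℝ => q.eval t * (Polynomial.derivative q).eval t)
      (Set.uIcc a b) :=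
    (q.continuous.mul (Polynomial.derivative q).continuous).continuousOn
  exact intervalIntegral.integral_eq_sub_of_hasDerivAt (fun t _ => h t)
    hc.intervalIntegrable

lemma mod_l1 (M a : ℕ) (hM : 1 ≤ M) (ha : a < M) : ((a + M - 1) % M + 1) % M = a := by
  rcases Nat.eq_zero_or_pos a with h | h
  · subst h
    rw [Nat.zero_add, Nat.mod_eq_of_lt (show M - 1 < M by omega),
      show M - 1 + 1 = M by omega, Nat.mod_self]
  · rw [show a + M - 1 = (a - 1) + M by omega, Nat.add_mod_right,
      Nat.mod_eq_of_lt (show a - 1 < M by omega), show a - 1 + 1 = a by omega,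
      Nat.mod_eq_of_lt ha]

lemma mod_l2 (M a : ℕ) (hM : 1 ≤ M) (ha : a < M) : ((a + 1) % M + M - 1) % M = a := by
  rcases Nat.eq_or_lt_of_le ha with h | h
  · rw [show a + 1 = M by omega, Nat.mod_self, Nat.zero_add,
      Nat.mod_eq_of_lt (show M - 1 < M by omega)]; omega
  · rw [Nat.mod_eq_of_lt (show a + 1 < M by omega),
      show a + 1 + M - 1 = a + M by omega, Nat.add_mod_right, Nat.mod_eq_of_lt ha]

lemma sum_shift (M : ℕ) (hM : 1 ≤ M) (f : ℕ → ℝ) :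
    ∑ j ∈ Finset.range M, f ((j + M - 1) % M) = ∑ j ∈ Finset.range M, f j := by
  apply Finset.sum_nbij' (i := fun j => (j + M - 1) % M) (j := fun j => (j + 1) % M)
  · intro a ha; simp only [Finset.mem_range] at *; exact Nat.mod_lt _ (by omega)
  · intro a ha; simp only [Finset.mem_range] at *; exact Nat.mod_lt _ (by omega)
  · intro a ha; simp only [Finset.mem_range] at ha; exact mod_l1 M a hM ha
  · intro a ha; simp only [Finset.mem_range] at ha; exact mod_l2 M a hM ha
  · intro a ha; rfl

/-- The DG upwind energy identity for `u_t + u_x = 0` with periodic boundary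
conditions: on a partition `0 = x_0 < ⋯ < x_M = 1` with local polynomial pieces
`p_0, …, p_{M-1}` (indices modulo `M`, the node `x_M` identified with `x_0`, so the
upwind flux at `x_j` is the left trace `p_{j-1}(x_j)`), the energy form
`A = Σ_j [ ∫_{x_j}^{x_{j+1}} p_j p_j' dx − p_j(x_{j+1})² + p_{j−1}(x_j) p_j(x_j) ]`
equals `−(1/2) Σ_j (p_j(x_j) − p_{j−1}(x_j))²`; in particular `A ≤ 0`, giving `L²`
stability of the semi-discrete DG scheme with upwind flux. -/
theorem dg_upwind_energy (M : ℕ) (hM : 1 ≤ M) (x : ℕ → ℝ)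
    (hx0 : x 0 = 0) (hxM : x M = 1) (hmono : ∀ j < M, x j < x (j + 1))
    (p : ℕ → Polynomial ℝ) :
    (∑ j ∈ Finset.range M,
        ((∫ t in (x j)..(x (j + 1)),
            (p j).eval t * ((Polynomial.derivative (p j)).eval t))
          - (p j).eval (x (j + 1)) * (p j).eval (x (j + 1))
          + (p ((j + M - 1) % M)).eval (x ((j + M - 1) % M + 1)) * (p j).eval (x j)))
      = -(1 / 2) * ∑ j ∈ Finset.range M,
          ((p j).eval (x j) - (p ((j + M - 1) % M)).eval (x ((j + M - 1) % M + 1))) ^ 2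
    ∧ (∑ j ∈ Finset.range M,
        ((∫ t in (x j)..(x (j + 1)),
            (p j).eval t * ((Polynomial.derivative (p j)).eval t))
          - (p j).eval (x (j + 1)) * (p j).eval (x (j + 1))
          + (p ((j + M - 1) % M)).eval (x ((j + M - 1) % M + 1)) * (p j).eval (x j)))
        ≤ 0 := by
  set g : ℕ → ℝ := fun j => ((p j).eval (x (j + 1))) ^ 2 with hg
  have heq : (∑ j ∈ Finset.range M,
        ((∫ t in (x j)..(x (j + 1)),
            (p j).eval t * ((Polynomial.derivative (p j)).eval t))
          - (p j).eval (x (j + 1)) * (p j).eval (x (j + 1))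
          + (p ((j + M - 1) % M)).eval (x ((j + M - 1) % M + 1)) * (p j).eval (x j)))
      = -(1 / 2) * ∑ j ∈ Finset.range M,
          ((p j).eval (x j) - (p ((j + M - 1) % M)).eval (x ((j + M - 1) % M + 1))) ^ 2 := by
    have h1 : ∀ j ∈ Finset.range M,
        ((∫ t in (x j)..(x (j + 1)),
            (p j).eval t * ((Polynomial.derivative (p j)).eval t))
          - (p j).eval (x (j + 1)) * (p j).eval (x (j + 1))
          + (p ((j + M - 1) % M)).eval (x ((j + M - 1) % M + 1)) * (p j).eval (x j))
        = -(1 / 2) * ((p j).eval (x j)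
              - (p ((j + M - 1) % M)).eval (x ((j + M - 1) % M + 1))) ^ 2
          + ((1 / 2) * g ((j + M - 1) % M) - (1 / 2) * g j) := by
      intro j _
      rw [poly_int]
      simp only [hg]
      ring
    rw [Finset.sum_congr rfl h1, Finset.sum_add_distrib, Finset.sum_sub_distrib,
      ← Finset.mul_sum, ← Finset.mul_sum, ← Finset.mul_sum,
      sum_shift M hM g]
    ring
  refine ⟨heq, ?_⟩
  rw [heq]
  have : (0:ℝ) ≤ ∑ j ∈ Finset.range M,
      ((p j).eval (x j) - (p ((j + M - 1) % M)).eval (x ((j + M - 1) % M + 1))) ^ 2 :=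
    Finset.sum_nonneg fun j _ => sq_nonneg _
  nlinarith [this]
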